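/- Suppose full embedding support holds (p(e|x,π) > 0 and p(e|x,π₀) > 0 for all x,e) and the No Direct Effect assumption holds for the first two reward moments: q(x,a,e) = q̄(x,e) and m₂(x,a,e) = m̄₂(x,e) for all a. Let ŵ : X × E → ℝ be any estimated marginal importance weight, δ(x,e) := 1 − ŵ(x,e)/w(x,e), and σ̄²(x,e) := m̄₂(x,e) − q̄(x,e)². Then the single-sample variance of the estimator with weight ŵ satisfies: E₀[ŵ(x,e)²·m̄₂(x,e)] − (E₀[ŵ(x,e)·q̄(x,e)])² = ∑_{x} p(x) ∑_{e} p(e|x,π)·(1−δ(x,e))²·w(x,e)·σ̄²(x,e) + ∑_{x} p(x)·[ ∑_{e} p(e|x,π₀)·ŵ(x,e)²·q̄(x,e)² − ( ∑_{e} p(e|x,π₀)·ŵ(x,e)·q̄(x,e) )² ] + [ ∑_{x} p(x)·( ∑_{e} p(e|x,π)·(1−δ(x,e))·q̄(x,e) )² − ( ∑_{x} p(x) ∑_{e} p(e|x,π)·(1−δ(x,e))·q̄(x,e) )² ]. -/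
import Mathlib


open Finset

/-- Marginal embedding distribution `p(e|x,π')` of a policy `π'`. -/
noncomputable def pE {X A E : Type*} [Fintype A]
    (π' : X → A → ℝ) (φ : X → A → E → ℝ) (x : X) (e : E) : ℝ :=
  ∑ a, π' x a * φ x a e

/-- Marginal importance weight `w(x,e) = p(e|x,π)/p(e|x,π₀)`. -/
noncomputable def wE {X A E : Type*} [Fintype A]
    (πt π₀ : X → A → ℝ) (φ : X → A → E → ℝ) (x : X) (e : E) : ℝ :=
  pE πt φ x e / pE π₀ φ x e

/-- Expectation under the logging process. -/
noncomputable def E₀ {X A E : Type*} [Fintype X] [Fintype A] [Fintype E]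
    (p : X → ℝ) (π₀ : X → A → ℝ) (φ : X → A → E → ℝ) (f : X → A → E → ℝ) : ℝ :=
  ∑ x, ∑ a, ∑ e, p x * π₀ x a * φ x a e * f x a e

/-- Variance of MIPS with estimated marginal importance weights `ŵ`:
under full embedding support and No Direct Effect for the first two reward
moments, the single-sample variance decomposes into three terms. -/
theorem mips_variance_estimated_weights
    {X A E : Type*} [Fintype X] [Fintype A] [Fintype E]
    (p : X → ℝ) (πt π₀ : X → A → ℝ) (φ : X → A → E → ℝ)
    (q m₂ : X → A → E → ℝ) (qbar m2bar : X → E → ℝ)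
    (wHat : X → E → ℝ) (δ : X → E → ℝ) (σ2bar : X → E → ℝ)
    (hp : ∀ x, 0 ≤ p x) (hp1 : ∑ x, p x = 1)
    (hπt : ∀ x a, 0 ≤ πt x a) (hπt1 : ∀ x, ∑ a, πt x a = 1)
    (hπ₀ : ∀ x a, 0 ≤ π₀ x a) (hπ₀1 : ∀ x, ∑ a, π₀ x a = 1)
    (hφ : ∀ x a e, 0 ≤ φ x a e) (hφ1 : ∀ x a, ∑ e, φ x a e = 1)
    (hsuppt : ∀ x e, 0 < pE πt φ x e) (hsupp₀ : ∀ x e, 0 < pE π₀ φ x e)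
    (hq : ∀ x a e, q x a e = qbar x e)
    (hm : ∀ x a e, m₂ x a e = m2bar x e)
    (hδ : ∀ x e, δ x e = 1 - wHat x e / wE πt π₀ φ x e)
    (hσ : ∀ x e, σ2bar x e = m2bar x e - qbar x e ^ 2) :
    E₀ p π₀ φ (fun x _ e => wHat x e ^ 2 * m2bar x e) -
        (E₀ p π₀ φ (fun x _ e => wHat x e * qbar x e)) ^ 2 =
      (∑ x, p x * ∑ e, pE πt φ x e * (1 - δ x e) ^ 2 * wE πt π₀ φ x e * σ2bar x e) +
        (∑ x, p x * ((∑ e, pE π₀ φ x e * wHat x e ^ 2 * qbar x e ^ 2) -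
          (∑ e, pE π₀ φ x e * wHat x e * qbar x e) ^ 2)) +
        ((∑ x, p x * (∑ e, pE πt φ x e * (1 - δ x e) * qbar x e) ^ 2) -
          (∑ x, p x * ∑ e, pE πt φ x e * (1 - δ x e) * qbar x e) ^ 2) := by
  have hπt0 : ∀ x e, pE πt φ x e ≠ 0 := fun x e => (hsuppt x e).ne'
  have hπ00 : ∀ x e, pE π₀ φ x e ≠ 0 := fun x e => (hsupp₀ x e).ne'
  -- key pointwise identities
  have key1 : ∀ x e, pE πt φ x e * (1 - δ x e) = pE π₀ φ x e * wHat x e := by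
    intro x e
    rw [hδ, wE]
    field_simp [hπt0 x e, hπ00 x e]
    ring
  have key2 : ∀ x e, pE πt φ x e * (1 - δ x e) ^ 2 * wE πt π₀ φ x e
      = pE π₀ φ x e * wHat x e ^ 2 := by
    intro x e
    rw [hδ, wE]
    field_simp [hπt0 x e, hπ00 x e]
    ring
  -- rewrite E₀ of a-independent functions
  have hE : ∀ g : X → E → ℝ, E₀ p π₀ φ (fun x _ e => g x e)
      = ∑ x, p x * ∑ e, pE π₀ φ x e * g x e := by
    intro g
    unfold E₀ pE
    refine Finset.sum_congr rfl fun x _ => ?_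
    rw [Finset.sum_comm, Finset.mul_sum]
    refine Finset.sum_congr rfl fun e _ => ?_
    rw [Finset.sum_mul, Finset.mul_sum]
    refine Finset.sum_congr rfl fun a _ => ?_
    ring
  rw [hE, hE]
  -- rewrite RHS inner sums
  have r1 : ∀ x, (∑ e, pE πt φ x e * (1 - δ x e) ^ 2 * wE πt π₀ φ x e * σ2bar x e)
      = (∑ e, pE π₀ φ x e * (wHat x e ^ 2 * m2bar x e))
        - (∑ e, pE π₀ φ x e * wHat x e ^ 2 * qbar x e ^ 2) := by
    intro x
    rw [← Finset.sum_sub_distrib]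
    refine Finset.sum_congr rfl fun e _ => ?_
    rw [hσ]
    linear_combination (m2bar x e - qbar x e ^ 2) * key2 x e
  have r2 : ∀ x, (∑ e, pE πt φ x e * (1 - δ x e) * qbar x e)
      = ∑ e, pE π₀ φ x e * (wHat x e * qbar x e) := by
    intro x
    refine Finset.sum_congr rfl fun e _ => ?_
    linear_combination qbar x e * key1 x e
  simp only [r1, r2]
  set S : X → ℝ := fun x => ∑ e, pE π₀ φ x e * (wHat x e * qbar x e) with hS
  have r3 : ∀ x, (∑ e, pE π₀ φ x e * wHat x e * qbar x e) = S x := by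
    intro x
    refine Finset.sum_congr rfl fun e _ => ?_
    ring
  simp only [r3]
  rw [← Finset.sum_add_distrib]
  have h4 : (∑ x, (p x * ((∑ e, pE π₀ φ x e * (wHat x e ^ 2 * m2bar x e))
        - (∑ e, pE π₀ φ x e * wHat x e ^ 2 * qbar x e ^ 2))
      + p x * ((∑ e, pE π₀ φ x e * wHat x e ^ 2 * qbar x e ^ 2) - S x ^ 2)))
      + (∑ x, p x * S x ^ 2)
      = ∑ x, p x * (∑ e, pE π₀ φ x e * (wHat x e ^ 2 * m2bar x e)) := by
    rw [← Finset.sum_add_distrib]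
    refine Finset.sum_congr rfl fun x _ => ?_
    ring
  linarith [h4]
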